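/- Let H be a bipartite graph with keywords U_H and n bidders V, let f: U_H → V map exactly k keywords to each bidder, fix u ∈ U_H with v = f(u), fix 1 ≤ t ≤ n, let σ be a permutation of V, and let σ' be obtained from σ by removing v and reinserting it at rank t. If v is not matched by Ranking(H, π, σ'), then u is matched by Ranking(H, π, σ) to a bidder whose rank in σ is at most t. -/

import Mathlib

set_option linter.unusedSectionVars false

noncomputable def greedyMatchedUpTo (m : ℕ) {R : Type*} [Fintype R] [DecidableEq R]
    (A : Fin m → R → Prop) [∀ t v, Decidable (A t v)] (rk : R → ℕ) : ℕ → Finset R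
  | 0 => ∅
  | t + 1 =>
    let M := greedyMatchedUpTo m A rk t
    if h : t < m then
      let avail := Finset.univ.filter fun v => A ⟨t, h⟩ v ∧ v ∉ M
      if hne : avail.Nonempty then
        insert (Function.argminOn rk ↑avail (Finset.coe_nonempty.mpr hne)) M
      else M
    else M

noncomputable def greedyAssign (m : ℕ) {R : Type*} [Fintype R] [DecidableEq R]
    (A : Fin m → R → Prop) [∀ t v, Decidable (A t v)] (rk : R → ℕ) (u : Fin m) :
    Option R :=
  let M := greedyMatchedUpTo m A rk u.val
  let avail := Finset.univ.filter fun v => A u v ∧ v ∉ M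
  if hne : avail.Nonempty then
    some (Function.argminOn rk ↑avail (Finset.coe_nonempty.mpr hne))
  else none

section Helpers

variable {V : Type*} [Fintype V] [DecidableEq V]

/-- characterization of argminOn for injective rank functions -/
lemma argminOn_eq_of_min {rk : V → ℕ} (hinj : Function.Injective rk) (S : Finset V)
    (hS : S.Nonempty) {x : V} (hx : x ∈ S) (hmin : ∀ w ∈ S, rk x ≤ rk w) :
    Function.argminOn rk ↑S (Finset.coe_nonempty.mpr hS) = x := by
  set a := Function.argminOn rk ↑S (Finset.coe_nonempty.mpr hS) with ha
  have hmem : a ∈ (S : Set V) := Function.argminOn_mem rk ↑S _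
  have h1 : rk a ≤ rk x := Function.argminOn_le rk ↑S (by exact_mod_cast hx)
  have h2 : rk x ≤ rk a := hmin a (by exact_mod_cast hmem)
  exact hinj (le_antisymm h1 h2)


lemma argminOn_mem_finset (rk : V → ℕ) (S : Finset V) (hS : S.Nonempty) :
    Function.argminOn rk ↑S (Finset.coe_nonempty.mpr hS) ∈ S := by
  have := Function.argminOn_mem rk (↑S : Set V) (Finset.coe_nonempty.mpr hS)
  exact_mod_cast this

lemma argminOn_le_finset (rk : V → ℕ) (S : Finset V) (hS : S.Nonempty) {a : V} (ha : a ∈ S) :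
    rk (Function.argminOn rk ↑S (Finset.coe_nonempty.mpr hS)) ≤ rk a :=
  Function.argminOn_le rk (↑S : Set V) (Finset.mem_coe.mpr ha)

lemma gMUT_succ (m : ℕ) (A : Fin m → V → Prop) [∀ t v, Decidable (A t v)] (rk : V → ℕ)
    (s : ℕ) : greedyMatchedUpTo m A rk (s + 1) =
    (let M := greedyMatchedUpTo m A rk s
    if h : s < m then
      let avail := Finset.univ.filter fun v => A ⟨s, h⟩ v ∧ v ∉ M
      if hne : avail.Nonempty then
        insert (Function.argminOn rk ↑avail (Finset.coe_nonempty.mpr hne)) M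
      else M
    else M) := by
  rw [greedyMatchedUpTo]

lemma gMUT_succ_pos (m : ℕ) (A : Fin m → V → Prop) [∀ t v, Decidable (A t v)] (rk : V → ℕ)
    {s : ℕ} (h : s < m)
    (hne : (Finset.univ.filter fun w => A ⟨s, h⟩ w ∧ w ∉ greedyMatchedUpTo m A rk s).Nonempty) :
    greedyMatchedUpTo m A rk (s + 1) =
      insert (Function.argminOn rk
        ↑(Finset.univ.filter fun w => A ⟨s, h⟩ w ∧ w ∉ greedyMatchedUpTo m A rk s)
        (Finset.coe_nonempty.mpr hne)) (greedyMatchedUpTo m A rk s) := by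
  rw [gMUT_succ]
  dsimp only
  rw [dif_pos h, dif_pos hne]

lemma gMUT_succ_neg (m : ℕ) (A : Fin m → V → Prop) [∀ t v, Decidable (A t v)] (rk : V → ℕ)
    {s : ℕ} (h : s < m)
    (hne : ¬ (Finset.univ.filter fun w => A ⟨s, h⟩ w ∧ w ∉ greedyMatchedUpTo m A rk s).Nonempty) :
    greedyMatchedUpTo m A rk (s + 1) = greedyMatchedUpTo m A rk s := by
  rw [gMUT_succ]
  dsimp only
  rw [dif_pos h, dif_neg hne]

lemma gMUT_succ_ge (m : ℕ) (A : Fin m → V → Prop) [∀ t v, Decidable (A t v)] (rk : V → ℕ)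
    {s : ℕ} (h : ¬ s < m) :
    greedyMatchedUpTo m A rk (s + 1) = greedyMatchedUpTo m A rk s := by
  rw [gMUT_succ]
  dsimp only
  rw [dif_neg h]

lemma gMUT_mono (m : ℕ) (A : Fin m → V → Prop) [∀ t v, Decidable (A t v)] (rk : V → ℕ)
    {s s' : ℕ} (h : s ≤ s') :
    greedyMatchedUpTo m A rk s ⊆ greedyMatchedUpTo m A rk s' := by
  induction s' with
  | zero => simp [Nat.le_zero.mp h]
  | succ n ih =>
    rcases Nat.lt_or_ge s (n+1) with h1 | h1
    · refine (ih (Nat.lt_succ_iff.mp h1)).trans ?_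
      by_cases h2 : n < m
      · by_cases h3 : (Finset.univ.filter fun w => A ⟨n, h2⟩ w ∧
            w ∉ greedyMatchedUpTo m A rk n).Nonempty
        · rw [gMUT_succ_pos m A rk h2 h3]; exact Finset.subset_insert _ _
        · rw [gMUT_succ_neg m A rk h2 h3]
      · rw [gMUT_succ_ge m A rk h2]
    · have : s = n + 1 := le_antisymm h h1
      subst this; exact Finset.Subset.refl _

/-- the two deleted-graph runs (under two rank functions agreeing in order off `v₀`)
coincide -/
lemma gMUT_del_rank_indep (m : ℕ) (A : Fin m → V → Prop) [∀ t v, Decidable (A t v)]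
    {rk rk' : V → ℕ} (v₀ : V) (hinj : Function.Injective rk) (hinj' : Function.Injective rk')
    (horder : ∀ w w' : V, w ≠ v₀ → w' ≠ v₀ → (rk w < rk w' ↔ rk' w < rk' w')) :
    ∀ s, greedyMatchedUpTo m (fun q w => A q w ∧ w ≠ v₀) rk s
       = greedyMatchedUpTo m (fun q w => A q w ∧ w ≠ v₀) rk' s := by
  intro s
  induction s with
  | zero => rfl
  | succ n ih =>
    by_cases h : n < m
    · have hsets : (Finset.univ.filter fun w => (A ⟨n, h⟩ w ∧ w ≠ v₀) ∧
          w ∉ greedyMatchedUpTo m (fun q w => A q w ∧ w ≠ v₀) rk' n)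
        = (Finset.univ.filter fun w => (A ⟨n, h⟩ w ∧ w ≠ v₀) ∧
          w ∉ greedyMatchedUpTo m (fun q w => A q w ∧ w ≠ v₀) rk n) := by
        simp only [ih]
      by_cases hne : (Finset.univ.filter fun w => (A ⟨n, h⟩ w ∧ w ≠ v₀) ∧
          w ∉ greedyMatchedUpTo m (fun q w => A q w ∧ w ≠ v₀) rk n).Nonempty
      · have hne' : (Finset.univ.filter fun w => (A ⟨n, h⟩ w ∧ w ≠ v₀) ∧
            w ∉ greedyMatchedUpTo m (fun q w => A q w ∧ w ≠ v₀) rk' n).Nonempty := by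
          rw [hsets]; exact hne
        rw [gMUT_succ_pos m _ rk h hne, gMUT_succ_pos m _ rk' h hne']
        set S := Finset.univ.filter fun w => (A ⟨n, h⟩ w ∧ w ≠ v₀) ∧
          w ∉ greedyMatchedUpTo m (fun q w => A q w ∧ w ≠ v₀) rk n with hSdef
        set S' := Finset.univ.filter fun w => (A ⟨n, h⟩ w ∧ w ≠ v₀) ∧
          w ∉ greedyMatchedUpTo m (fun q w => A q w ∧ w ≠ v₀) rk' n with hS'def
        set x := Function.argminOn rk ↑S (Finset.coe_nonempty.mpr hne) with hx
        have hxmem : x ∈ S := by rw [hx]; exact argminOn_mem_finset rk S hne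
        have hxne : x ≠ v₀ := (Finset.mem_filter.mp hxmem).2.1.2
        have hxmem' : x ∈ S' := hsets ▸ hxmem
        have hmin : ∀ w ∈ S', rk' x ≤ rk' w := by
          intro w hw
          rw [hsets] at hw
          by_cases hwx : w = x
          · subst hwx; exact le_refl _
          · have h1 : rk x ≤ rk w := hx ▸ argminOn_le_finset rk S hne hw
            have h2 : rk x < rk w := lt_of_le_of_ne h1 (fun he => hwx (hinj he.symm))
            have hwne : w ≠ v₀ := (Finset.mem_filter.mp hw).2.1.2
            exact le_of_lt ((horder x w hxne hwne).mp h2)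
        rw [argminOn_eq_of_min hinj' S' hne' hxmem' hmin]
        exact congrArg (insert x) ih
      · have hne' : ¬ (Finset.univ.filter fun w => (A ⟨n, h⟩ w ∧ w ≠ v₀) ∧
            w ∉ greedyMatchedUpTo m (fun q w => A q w ∧ w ≠ v₀) rk' n).Nonempty := by
          rw [hsets]; exact hne
        rw [gMUT_succ_neg m _ rk h hne, gMUT_succ_neg m _ rk' h hne', ih]
    · rw [gMUT_succ_ge m _ rk h, gMUT_succ_ge m _ rk' h, ih]

/-- if `v₀` is never matched by the full run then the full run equals the deleted run -/
lemma full_eq_del (m : ℕ) (A : Fin m → V → Prop) [∀ t v, Decidable (A t v)]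
    (rk : V → ℕ) (hinj : Function.Injective rk) (v₀ : V)
    (hnm : v₀ ∉ greedyMatchedUpTo m A rk m) :
    ∀ s, greedyMatchedUpTo m A rk s = greedyMatchedUpTo m (fun q w => A q w ∧ w ≠ v₀) rk s := by
  intro s
  induction s with
  | zero => rfl
  | succ n ih =>
    by_cases h : n < m
    · have hDsub : (Finset.univ.filter fun w => (A ⟨n, h⟩ w ∧ w ≠ v₀) ∧
          w ∉ greedyMatchedUpTo m (fun q w => A q w ∧ w ≠ v₀) rk n)
          ⊆ (Finset.univ.filter fun w => A ⟨n, h⟩ w ∧ w ∉ greedyMatchedUpTo m A rk n) := by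
        intro w hw
        obtain ⟨-, ⟨hA, -⟩, hnmem⟩ := Finset.mem_filter.mp hw
        refine Finset.mem_filter.mpr ⟨Finset.mem_univ _, hA, ?_⟩
        rw [ih]; exact hnmem
      by_cases hne : (Finset.univ.filter fun w => A ⟨n, h⟩ w ∧
          w ∉ greedyMatchedUpTo m A rk n).Nonempty
      · set x := Function.argminOn rk
          ↑(Finset.univ.filter fun w => A ⟨n, h⟩ w ∧ w ∉ greedyMatchedUpTo m A rk n)
          (Finset.coe_nonempty.mpr hne) with hx
        have hxmem : x ∈ (Finset.univ.filter fun w => A ⟨n, h⟩ w ∧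
            w ∉ greedyMatchedUpTo m A rk n) := by
          rw [hx]; exact argminOn_mem_finset rk _ hne
        have hxfull : x ∈ greedyMatchedUpTo m A rk (n + 1) := by
          rw [gMUT_succ_pos m A rk h hne]
          exact Finset.mem_insert_self _ _
        have hxne : x ≠ v₀ := by
          intro he
          exact hnm (gMUT_mono m A rk (Nat.succ_le_of_lt h) (he ▸ hxfull))
        have hxD : x ∈ (Finset.univ.filter fun w => (A ⟨n, h⟩ w ∧ w ≠ v₀) ∧
            w ∉ greedyMatchedUpTo m (fun q w => A q w ∧ w ≠ v₀) rk n) := by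
          refine Finset.mem_filter.mpr ⟨Finset.mem_univ _,
            ⟨(Finset.mem_filter.mp hxmem).2.1, hxne⟩, ?_⟩
          rw [← ih]; exact (Finset.mem_filter.mp hxmem).2.2
        have hneD : (Finset.univ.filter fun w => (A ⟨n, h⟩ w ∧ w ≠ v₀) ∧
            w ∉ greedyMatchedUpTo m (fun q w => A q w ∧ w ≠ v₀) rk n).Nonempty := ⟨x, hxD⟩
        have hmin : ∀ w ∈ (Finset.univ.filter fun w => (A ⟨n, h⟩ w ∧ w ≠ v₀) ∧
            w ∉ greedyMatchedUpTo m (fun q w => A q w ∧ w ≠ v₀) rk n), rk x ≤ rk w := by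
          intro w hw
          exact hx ▸ argminOn_le_finset rk _ hne (hDsub hw)
        rw [gMUT_succ_pos m A rk h hne, gMUT_succ_pos m _ rk h hneD,
          argminOn_eq_of_min hinj _ hneD hxD hmin]
        exact congrArg (insert x) ih
      · have hneD : ¬ (Finset.univ.filter fun w => (A ⟨n, h⟩ w ∧ w ≠ v₀) ∧
            w ∉ greedyMatchedUpTo m (fun q w => A q w ∧ w ≠ v₀) rk n).Nonempty := by
          intro ⟨w, hw⟩
          exact hne ⟨w, hDsub hw⟩
        rw [gMUT_succ_neg m A rk h hne, gMUT_succ_neg m _ rk h hneD, ih]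
    · rw [gMUT_succ_ge m A rk h, gMUT_succ_ge m _ rk h, ih]

/-- the full run matches only `v₀` and bidders matched in the deleted run -/
lemma full_subset_del (m : ℕ) (A : Fin m → V → Prop) [∀ t v, Decidable (A t v)]
    (rk : V → ℕ) (hinj : Function.Injective rk) (v₀ : V) :
    ∀ s, greedyMatchedUpTo m A rk s ⊆
      insert v₀ (greedyMatchedUpTo m (fun q w => A q w ∧ w ≠ v₀) rk s) := by
  intro s
  induction s with
  | zero => simp [greedyMatchedUpTo]
  | succ n ih =>
    have hNmono : greedyMatchedUpTo m (fun q w => A q w ∧ w ≠ v₀) rk n ⊆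
        greedyMatchedUpTo m (fun q w => A q w ∧ w ≠ v₀) rk (n + 1) :=
      gMUT_mono m _ rk (Nat.le_succ n)
    have htail : greedyMatchedUpTo m A rk n ⊆
        insert v₀ (greedyMatchedUpTo m (fun q w => A q w ∧ w ≠ v₀) rk (n + 1)) :=
      ih.trans (Finset.insert_subset_insert _ hNmono)
    by_cases h : n < m
    · by_cases hne : (Finset.univ.filter fun w => A ⟨n, h⟩ w ∧
          w ∉ greedyMatchedUpTo m A rk n).Nonempty
      · rw [gMUT_succ_pos m A rk h hne]
        intro w hw
        rcases Finset.mem_insert.mp hw with rfl | hw2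
        · -- w is the newly inserted argmin x
          set x := Function.argminOn rk
            ↑(Finset.univ.filter fun w => A ⟨n, h⟩ w ∧ w ∉ greedyMatchedUpTo m A rk n)
            (Finset.coe_nonempty.mpr hne) with hx
          have hxmem : x ∈ (Finset.univ.filter fun w => A ⟨n, h⟩ w ∧
              w ∉ greedyMatchedUpTo m A rk n) := by
            rw [hx]; exact argminOn_mem_finset rk _ hne
          by_cases hxv : x = v₀
          · exact Finset.mem_insert.mpr (Or.inl hxv)
          by_cases hxN : x ∈ greedyMatchedUpTo m (fun q w => A q w ∧ w ≠ v₀) rk n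
          · exact Finset.mem_insert.mpr (Or.inr (hNmono hxN))
          -- x is available for the deleted run, and it is its argmin
          have hxD : x ∈ (Finset.univ.filter fun w => (A ⟨n, h⟩ w ∧ w ≠ v₀) ∧
              w ∉ greedyMatchedUpTo m (fun q w => A q w ∧ w ≠ v₀) rk n) :=
            Finset.mem_filter.mpr ⟨Finset.mem_univ _,
              ⟨(Finset.mem_filter.mp hxmem).2.1, hxv⟩, hxN⟩
          have hneD : (Finset.univ.filter fun w => (A ⟨n, h⟩ w ∧ w ≠ v₀) ∧
              w ∉ greedyMatchedUpTo m (fun q w => A q w ∧ w ≠ v₀) rk n).Nonempty := ⟨x, hxD⟩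
          have hmin : ∀ w ∈ (Finset.univ.filter fun w => (A ⟨n, h⟩ w ∧ w ≠ v₀) ∧
              w ∉ greedyMatchedUpTo m (fun q w => A q w ∧ w ≠ v₀) rk n), rk x ≤ rk w := by
            intro w hw
            obtain ⟨-, ⟨hA, hwv⟩, hwN⟩ := Finset.mem_filter.mp hw
            have hwM : w ∉ greedyMatchedUpTo m A rk n := by
              intro hmem
              rcases Finset.mem_insert.mp (ih hmem) with h' | h'
              · exact hwv h'
              · exact hwN h'
            exact hx ▸ argminOn_le_finset rk _ hne
              (Finset.mem_filter.mpr ⟨Finset.mem_univ _, hA, hwM⟩)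
          have hxisargmin := argminOn_eq_of_min hinj _ hneD hxD hmin
          have : x ∈ greedyMatchedUpTo m (fun q w => A q w ∧ w ≠ v₀) rk (n + 1) := by
            rw [gMUT_succ_pos m _ rk h hneD, hxisargmin]
            exact Finset.mem_insert_self _ _
          exact Finset.mem_insert.mpr (Or.inr this)
        · exact htail hw2
      · rw [gMUT_succ_neg m A rk h hne]; exact htail
    · rw [gMUT_succ_ge m A rk h]; exact htail

lemma rank_filter_card {nV : ℕ} (e : V ≃ Fin nV) (w : V) :
    (Finset.univ.filter fun w' => e w' < e w).card = (e w : ℕ) := by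
  rw [← Fin.card_Iio (e w)]
  apply Finset.card_bij (fun w' _ => e w')
  · intro a ha
    simpa [Finset.mem_Iio] using (Finset.mem_filter.mp ha).2
  · intro a _ b _ hab
    exact e.injective hab
  · intro b hb
    exact ⟨e.symm b, Finset.mem_filter.mpr ⟨Finset.mem_univ _,
      by simpa using Finset.mem_Iio.mp hb⟩, e.apply_symm_apply b⟩

lemma sigma_rank_le {nV : ℕ} (σ σ' : V ≃ Fin nV) (v₀ : V) (t : Fin nV) (hσ'v : σ' v₀ = t)
    (hσ' : ∀ w w' : V, w ≠ v₀ → w' ≠ v₀ → (σ w < σ w' ↔ σ' w < σ' w'))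
    {w : V} (hw : w ≠ v₀) (hlt : (σ' w : ℕ) < (t : ℕ)) : (σ w : ℕ) ≤ (t : ℕ) := by
  have h1 := rank_filter_card σ w
  have h2 := rank_filter_card σ' w
  have hsub : (Finset.univ.filter fun a => σ a < σ w) ⊆
      insert v₀ (Finset.univ.filter fun a => σ' a < σ' w) := by
    intro a ha
    by_cases hav : a = v₀
    · exact Finset.mem_insert.mpr (Or.inl hav)
    · exact Finset.mem_insert.mpr (Or.inr (Finset.mem_filter.mpr ⟨Finset.mem_univ _,
        (hσ' a w hav hw).mp (Finset.mem_filter.mp ha).2⟩))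
  calc (σ w : ℕ) = (Finset.univ.filter fun a => σ a < σ w).card := h1.symm
    _ ≤ (insert v₀ (Finset.univ.filter fun a => σ' a < σ' w)).card := Finset.card_le_card hsub
    _ ≤ (Finset.univ.filter fun a => σ' a < σ' w).card + 1 := Finset.card_insert_le _ _
    _ = (σ' w : ℕ) + 1 := by rw [h2]
    _ ≤ (t : ℕ) := hlt

end Helpers

/-- Let `H` have keywords `Fin m` and `nV` bidders `V`, let
`f : Fin m → V` map exactly `k` keywords to each bidder (each adjacent to it), fix a
keyword `u` with `v = f u`, a target rank `t`, a ranking `σ`, and let `σ'` be obtained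
from `σ` by removing `v` and reinserting it at rank `t` (i.e. `σ' v = t` and `σ'` agrees
with `σ` on the relative order of all other bidders).  If `v` is unmatched by Ranking
under `σ'`, then Ranking under `σ` matches `u` to a bidder of rank at most `t`. -/
theorem stmt11 (m nV k : ℕ) {V : Type*} [Fintype V] [DecidableEq V]
    (hV : Fintype.card V = nV)
    (A : Fin m → V → Prop) [∀ t v, Decidable (A t v)]
    (f : Fin m → V)
    (hfib : ∀ v : V, (Finset.univ.filter fun u => f u = v).card = k)
    (hadj : ∀ u, A u (f u))
    (u : Fin m) (t : Fin nV)
    (σ σ' : V ≃ Fin nV)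
    (hσ'v : σ' (f u) = t)
    (hσ' : ∀ w w' : V, w ≠ f u → w' ≠ f u → (σ w < σ w' ↔ σ' w < σ' w'))
    (hunmatched : f u ∉ greedyMatchedUpTo m A (fun v => (σ' v : ℕ)) m) :
    ∃ v' : V, greedyAssign m A (fun v => (σ v : ℕ)) u = some v' ∧ (σ v' : ℕ) ≤ (t : ℕ) := by
  set v₀ := f u with hv₀def
  set rk : V → ℕ := fun v => (σ v : ℕ) with hrkdef
  set rk' : V → ℕ := fun v => (σ' v : ℕ) with hrk'def
  have hinj : Function.Injective rk := fun a b hab => σ.injective (Fin.val_injective hab)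
  have hinj' : Function.Injective rk' := fun a b hab => σ'.injective (Fin.val_injective hab)
  have horder : ∀ w w' : V, w ≠ v₀ → w' ≠ v₀ → (rk w < rk w' ↔ rk' w < rk' w') := by
    intro w w' h1 h2
    constructor
    · intro hlt; exact Fin.lt_def.mp ((hσ' w w' h1 h2).mp (Fin.lt_def.mpr hlt))
    · intro hlt; exact Fin.lt_def.mp ((hσ' w w' h1 h2).mpr (Fin.lt_def.mpr hlt))
  have hNN' := gMUT_del_rank_indep m A v₀ hinj hinj' horder
  have hM2N' := full_eq_del m A rk' hinj' v₀ hunmatched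
  have hMsub := full_subset_del m A rk hinj v₀
  -- the step at keyword u in the σ'-full run
  have hv₀mem : v₀ ∉ greedyMatchedUpTo m A rk' u.val :=
    fun hmem => hunmatched (gMUT_mono m A rk' u.isLt.le hmem)
  have hv₀av : v₀ ∈ (Finset.univ.filter fun w => A ⟨u.val, u.isLt⟩ w ∧
      w ∉ greedyMatchedUpTo m A rk' u.val) :=
    Finset.mem_filter.mpr ⟨Finset.mem_univ _, hadj u, hv₀mem⟩
  have hne2 : (Finset.univ.filter fun w => A ⟨u.val, u.isLt⟩ w ∧
      w ∉ greedyMatchedUpTo m A rk' u.val).Nonempty := ⟨v₀, hv₀av⟩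
  set x := Function.argminOn rk'
    ↑(Finset.univ.filter fun w => A ⟨u.val, u.isLt⟩ w ∧
      w ∉ greedyMatchedUpTo m A rk' u.val) (Finset.coe_nonempty.mpr hne2) with hxdef
  have hxmem : x ∈ (Finset.univ.filter fun w => A ⟨u.val, u.isLt⟩ w ∧
      w ∉ greedyMatchedUpTo m A rk' u.val) := by
    rw [hxdef]; exact argminOn_mem_finset rk' _ hne2
  have hxstep : x ∈ greedyMatchedUpTo m A rk' (u.val + 1) := by
    rw [gMUT_succ_pos m A rk' u.isLt hne2]
    exact Finset.mem_insert_self _ _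
  have hxne : x ≠ v₀ := by
    intro he
    exact hunmatched (gMUT_mono m A rk' (Nat.succ_le_of_lt u.isLt) (he ▸ hxstep))
  have hrk'v₀ : rk' v₀ = (t : ℕ) := by rw [hrk'def]; simp [hσ'v]
  have hxrk : rk' x ≤ (t : ℕ) := by
    have := argminOn_le_finset rk' _ hne2 hv₀av
    rw [← hxdef, hrk'v₀] at this
    exact this
  have hxlt : rk' x < (t : ℕ) :=
    lt_of_le_of_ne hxrk (fun he => hxne (hinj' (he.trans hrk'v₀.symm)))
  have hxσ : rk x ≤ (t : ℕ) := sigma_rank_le σ σ' v₀ t hσ'v hσ' hxne hxlt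
  -- x is available at step u for the σ-run
  have hxN : x ∉ greedyMatchedUpTo m (fun q w => A q w ∧ w ≠ v₀) rk u.val := by
    rw [hNN' u.val, ← hM2N' u.val]
    exact (Finset.mem_filter.mp hxmem).2.2
  have hxMσ : x ∉ greedyMatchedUpTo m A rk u.val := by
    intro hmem
    rcases Finset.mem_insert.mp (hMsub u.val hmem) with h | h
    · exact hxne h
    · exact hxN h
  have hxavσ : x ∈ (Finset.univ.filter fun w => A u w ∧
      w ∉ greedyMatchedUpTo m A rk u.val) :=
    Finset.mem_filter.mpr ⟨Finset.mem_univ _, (Finset.mem_filter.mp hxmem).2.1, hxMσ⟩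
  have hneσ : (Finset.univ.filter fun w => A u w ∧
      w ∉ greedyMatchedUpTo m A rk u.val).Nonempty := ⟨x, hxavσ⟩
  refine ⟨Function.argminOn rk
    ↑(Finset.univ.filter fun w => A u w ∧ w ∉ greedyMatchedUpTo m A rk u.val)
    (Finset.coe_nonempty.mpr hneσ), ?_, ?_⟩
  · rw [greedyAssign]
    rw [dif_pos hneσ]
  · exact (argminOn_le_finset rk _ hneσ hxavσ).trans hxσ
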